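/- For all vectors a, b, c in ℝ^d with ‖a‖₂ = R₀, ‖c‖₂ ≤ R₀, and ‖b − c‖₂² + ‖b‖₂² ≤ ‖c‖₂², it holds that ‖a − c‖₂·‖b − c‖₂ ≤ 2·‖a − b‖₂·‖a‖₂. -/

import Mathlib

open RealInnerProductSpace
lemma myInvBall {E : Type*} [NormedAddCommGroup E] [InnerProductSpace ℝ E]
    (u m : E) (ρ x : ℝ) (hx : x = ‖m‖^2 - ρ^2) (hxpos : 0 < x)
    (hu0 : u ≠ 0) (hum : ‖u - m‖ ≤ ρ) :
    ‖(‖u‖^2)⁻¹ • u - x⁻¹ • m‖ ≤ ρ / x := by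
  have hun : (0:ℝ) < ‖u‖ := norm_pos_iff.mpr hu0
  have hρ : 0 ≤ ρ := le_trans (norm_nonneg _) hum
  have hum2 : ‖u - m‖^2 ≤ ρ^2 := by nlinarith [norm_nonneg (u - m)]
  rw [norm_sub_sq_real] at hum2
  have h2 : (0:ℝ) < ‖u‖^2 := by positivity
  have goal2 : x^2 - 2*x*(inner ℝ u m : ℝ) + ‖u‖^2*‖m‖^2 ≤ ρ^2 * ‖u‖^2 := by
    nlinarith [mul_le_mul_of_nonneg_left hum2 hxpos.le]
  have key : ‖(‖u‖^2)⁻¹ • u - x⁻¹ • m‖^2 ≤ (ρ/x)^2 := by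
    rw [norm_sub_sq_real, real_inner_smul_left, real_inner_smul_right,
      norm_smul, norm_smul]
    simp only [Real.norm_eq_abs, abs_inv, abs_pow, abs_norm, abs_of_pos hxpos]
    rw [← sub_nonneg]
    have hrew : (ρ/x)^2 - (((‖u‖^2)⁻¹*‖u‖)^2 - 2*((‖u‖^2)⁻¹*(x⁻¹*(inner ℝ u m : ℝ))) + (x⁻¹*‖m‖)^2)
        = (ρ^2*‖u‖^2 - (x^2 - 2*x*(inner ℝ u m : ℝ) + ‖u‖^2*‖m‖^2))/(‖u‖^2*x^2) := by
      field_simp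
    rw [hrew]
    exact div_nonneg (by linarith) (by positivity)
  nlinarith [key, norm_nonneg ((‖u‖^2)⁻¹ • u - x⁻¹ • m), div_nonneg hρ hxpos.le]

lemma myInvDist {E : Type*} [NormedAddCommGroup E] [InnerProductSpace ℝ E]
    (u w : E) (hu0 : u ≠ 0) (hw0 : w ≠ 0) :
    ‖u - w‖ ≤ ‖u‖ * ‖w‖ * ‖(‖u‖^2)⁻¹ • u - (‖w‖^2)⁻¹ • w‖ := by
  have hun : (0:ℝ) < ‖u‖ := norm_pos_iff.mpr hu0
  have hwn : (0:ℝ) < ‖w‖ := norm_pos_iff.mpr hw0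
  have hsq : (‖u‖ * ‖w‖ * ‖(‖u‖^2)⁻¹ • u - (‖w‖^2)⁻¹ • w‖)^2 = ‖u - w‖^2 := by
    rw [mul_pow, mul_pow, norm_sub_sq_real, norm_sub_sq_real,
      real_inner_smul_left, real_inner_smul_right, norm_smul, norm_smul]
    simp only [Real.norm_eq_abs, abs_inv, abs_pow, abs_norm]
    field_simp
    ring
  nlinarith [hsq, norm_nonneg (u - w),
    mul_nonneg (mul_nonneg hun.le hwn.le) (norm_nonneg ((‖u‖^2)⁻¹ • u - (‖w‖^2)⁻¹ • w))]

set_option maxHeartbeats 1000000 in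
/-- For `a, b, c ∈ ℝ^d` with `‖a‖ = R₀`, `‖c‖ ≤ R₀`, and `‖b − c‖² + ‖b‖² ≤ ‖c‖²`,
we have `‖a − c‖ ⬝ ‖b − c‖ ≤ 2 ‖a − b‖ ⬝ ‖a‖`. -/
theorem stmt_15 {d : ℕ} (R₀ : ℝ) (hR : 0 < R₀)
    (a b c : EuclideanSpace ℝ (Fin d))
    (ha : ‖a‖ = R₀) (hc : ‖c‖ ≤ R₀)
    (hbc : ‖b - c‖ ^ 2 + ‖b‖ ^ 2 ≤ ‖c‖ ^ 2) :
    ‖a - c‖ * ‖b - c‖ ≤ 2 * ‖a - b‖ * ‖a‖ := by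
  rcases eq_or_ne a c with rfl | hac
  · simp only [sub_self, norm_zero, zero_mul]
    positivity
  -- notation
  have hCA : ‖c‖^2 ≤ ‖a‖^2 := by nlinarith [norm_nonneg c]
  have hrB : ‖b‖^2 ≤ (inner ℝ b c : ℝ) := by
    rw [norm_sub_sq_real] at hbc; linarith
  have hw0 : c - a ≠ 0 := sub_ne_zero.mpr (Ne.symm hac)
  have hwn : (0:ℝ) < ‖c - a‖ := norm_pos_iff.mpr hw0
  set x : ℝ := ‖a‖^2 - (inner ℝ a c : ℝ) with hxdef
  have hacw : ‖a - c‖ = ‖c - a‖ := norm_sub_rev a c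
  have hx2 : ‖c - a‖^2 = 2*x - (‖a‖^2 - ‖c‖^2) := by
    rw [norm_sub_sq_real, hxdef, real_inner_comm c a]; ring
  have hxpos : (0:ℝ) < x := by nlinarith [hwn, sq_nonneg ‖c - a‖, mul_pos hwn hwn]
  have hb0 : b ≠ a := by
    rintro rfl
    rw [hacw] at hbc
    nlinarith [hwn, mul_pos hwn hwn]
  have hu0 : b - a ≠ 0 := sub_ne_zero.mpr hb0
  have hun : (0:ℝ) < ‖b - a‖ := norm_pos_iff.mpr hu0
  set m : EuclideanSpace ℝ (Fin d) := (1/2 : ℝ) • c - a with hmdef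
  set ρ : ℝ := ‖c‖/2 with hρdef
  have hmx : x = ‖m‖^2 - ρ^2 := by
    rw [hmdef, hρdef, norm_sub_sq_real, real_inner_smul_left, norm_smul, hxdef,
      real_inner_comm c a]
    simp [div_pow]
    ring
  have h1 : ‖(b - a) - m‖ ≤ ρ := by
    have he : (b - a) - m = b - (1/2:ℝ) • c := by rw [hmdef]; abel
    rw [he, hρdef]
    have hsq : ‖b - (1/2:ℝ) • c‖^2 = ‖b‖^2 - (inner ℝ b c : ℝ) + ‖c‖^2/4 := by
      rw [norm_sub_sq_real, real_inner_smul_right, norm_smul]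
      simp [div_pow]
      ring
    have hsq2 : ‖b - (1/2:ℝ) • c‖^2 ≤ (‖c‖/2)^2 := by rw [hsq]; nlinarith
    exact (pow_le_pow_iff_left₀ (norm_nonneg _) (by positivity) two_ne_zero).mp hsq2
  have h2 : ‖(c - a) - m‖ ≤ ρ := by
    have he : (c - a) - m = (1/2:ℝ) • c := by
      rw [hmdef]; module
    rw [he, norm_smul, hρdef]
    simp
    linarith
  have k1 := myInvBall (b - a) m ρ x hmx hxpos hu0 h1
  have k2 := myInvBall (c - a) m ρ x hmx hxpos hw0 h2
  have kd := myInvDist (b - a) (c - a) hu0 hw0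
  have tri : ‖(‖b - a‖^2)⁻¹ • (b - a) - (‖c - a‖^2)⁻¹ • (c - a)‖ ≤ ρ/x + ρ/x := by
    calc ‖(‖b - a‖^2)⁻¹ • (b - a) - (‖c - a‖^2)⁻¹ • (c - a)‖
        ≤ ‖(‖b - a‖^2)⁻¹ • (b - a) - x⁻¹ • m‖ + ‖x⁻¹ • m - (‖c - a‖^2)⁻¹ • (c - a)‖ :=
          norm_sub_le_norm_sub_add_norm_sub _ _ _
      _ = ‖(‖b - a‖^2)⁻¹ • (b - a) - x⁻¹ • m‖ + ‖(‖c - a‖^2)⁻¹ • (c - a) - x⁻¹ • m‖ := by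
          rw [norm_sub_rev (x⁻¹ • m)]
      _ ≤ ρ/x + ρ/x := add_le_add k1 k2
  have hbcuw : b - c = (b - a) - (c - a) := by abel
  have hmain : ‖b - c‖ ≤ ‖b - a‖ * ‖c - a‖ * (ρ/x + ρ/x) := by
    rw [hbcuw]
    calc ‖(b - a) - (c - a)‖ ≤ ‖b - a‖ * ‖c - a‖ * ‖(‖b - a‖^2)⁻¹ • (b - a) - (‖c - a‖^2)⁻¹ • (c - a)‖ := kd
      _ ≤ ‖b - a‖ * ‖c - a‖ * (ρ/x + ρ/x) := by
          apply mul_le_mul_of_nonneg_left tri (by positivity)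
  -- finish
  have hx' : ‖b - c‖ * x ≤ ‖b - a‖ * ‖c - a‖ * ‖c‖ := by
    have := mul_le_mul_of_nonneg_right hmain hxpos.le
    calc ‖b - c‖ * x ≤ (‖b - a‖ * ‖c - a‖ * (ρ/x + ρ/x)) * x := this
      _ = ‖b - a‖ * ‖c - a‖ * ‖c‖ := by
          rw [hρdef]; field_simp; ring
  have hw2 : ‖c - a‖^2 ≤ 2*x := by nlinarith
  have habu : ‖a - b‖ = ‖b - a‖ := norm_sub_rev a b
  rw [hacw, habu, ha]
  have final : ‖c - a‖ * ‖b - c‖ * x ≤ 2 * ‖b - a‖ * R₀ * x := by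
    nlinarith [mul_le_mul_of_nonneg_left hx' (norm_nonneg (c - a)),
      mul_le_mul_of_nonneg_left hw2 (mul_nonneg (norm_nonneg (b - a)) (norm_nonneg c)),
      mul_le_mul_of_nonneg_left hc (mul_nonneg (mul_nonneg (by norm_num : (0:ℝ) ≤ 2) (norm_nonneg (b - a))) hxpos.le),
      norm_nonneg (b - c)]
  exact le_of_mul_le_mul_right final hxpos
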